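/- (Freedom in the normal form.) Let v ∈ ℂ^d and β ∈ 𝔤, let κ ∈ G, and set β̂ = κ★β★κ⁻¹ − (ξ_v κ)★κ⁻¹; assume ξ_v β̂ = 0. Let κ̃ ∈ G, set β̃ = κ̃★β★κ̃⁻¹ − (ξ_v κ̃)★κ̃⁻¹, and let δ = κ̃★κ⁻¹. Then ξ_v β̃ = 0 if and only if both ξ_v δ = 0 and β̃ = δ★β̂★δ⁻¹ hold. -/

import Mathlib

open scoped BigOperators

/-- Convolution product on `ℂ^W`: `(δ★δ′)_w = Σ_{w=w₁w₂} δ_{w₁} δ′_{w₂}`. -/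
noncomputable def conv {A : Type*} (x y : List A → ℂ) : List A → ℂ :=
  fun w => ∑ i ∈ Finset.range (w.length + 1), x (w.take i) * y (w.drop i)

/-- Shuffle product of two words, as a multiset of words. -/
def shuffle {A : Type*} : List A → List A → Multiset (List A)
  | [], w => {w}
  | w, [] => {w}
  | a :: u, b :: v =>
      ((shuffle u (b :: v)).map (a :: ·)) + ((shuffle (a :: u) v).map (b :: ·))

/-- Membership in the group `G`: the shuffle relations with `γ_∅ = 1`. -/
def isGrp {A : Type*} (γ : List A → ℂ) : Prop :=
  γ [] = 1 ∧ ∀ w w' : List A, γ w * γ w' = ((shuffle w w').map γ).sum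

/-- Membership in the Lie algebra `𝔤`. -/
def isLie {A : Type*} (β : List A → ℂ) : Prop :=
  β [] = 0 ∧ ∀ w w' : List A, w ≠ [] → w' ≠ [] → ((shuffle w w').map β).sum = 0

/-- The unit `1` of the convolution product. -/
def unitCW {A : Type*} : List A → ℂ := fun w => match w with | [] => 1 | _ => 0

/-- `ν^v_ℓ = Σ_j v_j ν_{j,ℓ}` for a letter `ℓ`. -/
noncomputable def nuL {A : Type*} {d : ℕ} (ν : Fin d → A → ℂ) (v : Fin d → ℂ) (ℓ : A) : ℂ :=
  ∑ j, v j * ν j ℓ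

/-- `ν^v_w = ν^v_{ℓ₁} + ⋯ + ν^v_{ℓ_n}` for a word `w = ℓ₁⋯ℓ_n`. -/
noncomputable def nuW {A : Type*} {d : ℕ} (ν : Fin d → A → ℂ) (v : Fin d → ℂ) (w : List A) : ℂ :=
  (w.map (nuL ν v)).sum

/-- The operator `Ξ_v`: `(Ξ_v δ)_w = exp(ν^v_w) δ_w`. -/
noncomputable def XiOp {A : Type*} {d : ℕ} (ν : Fin d → A → ℂ) (v : Fin d → ℂ)
    (δ : List A → ℂ) : List A → ℂ :=
  fun w => Complex.exp (nuW ν v w) * δ w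

/-- The operator `ξ_v`: `(ξ_v δ)_w = ν^v_w δ_w`. -/
noncomputable def xiOp {A : Type*} {d : ℕ} (ν : Fin d → A → ℂ) (v : Fin d → ℂ)
    (δ : List A → ℂ) : List A → ℂ :=
  fun w => nuW ν v w * δ w

namespace Aux

variable {A : Type*} {d : ℕ}

lemma conv_nil (x y : List A → ℂ) : conv x y [] = x [] * y [] := by
  simp [conv]

lemma conv_cons (x y : List A → ℂ) (a : A) (w : List A) :
    conv x y (a :: w) = x [] * y (a :: w) + conv (fun u => x (a :: u)) y w := by
  simp only [conv, List.length_cons]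
  rw [Finset.sum_range_succ']
  simp [add_comm]

lemma conv_zero_left (x : List A → ℂ) : conv 0 x = 0 := by
  funext w; simp [conv]

lemma conv_zero_right (x : List A → ℂ) : conv x 0 = 0 := by
  funext w; simp [conv]

lemma conv_unit_left (x : List A → ℂ) : conv unitCW x = x := by
  funext w
  cases w with
  | nil => simp [conv_nil, unitCW]
  | cons a w =>
    rw [conv_cons]
    have : (fun u => unitCW (a :: u)) = (0 : List A → ℂ) := by
      funext u; simp [unitCW]
    rw [this, conv_zero_left]
    simp [unitCW]

lemma conv_unit_right (x : List A → ℂ) : conv x unitCW = x := by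
  funext w
  unfold conv
  rw [Finset.sum_eq_single w.length]
  · simp [unitCW]
  · intro i hi hne
    have hlt : i < w.length := lt_of_le_of_ne (Nat.lt_succ_iff.mp (Finset.mem_range.mp hi)) hne
    have : w.drop i ≠ [] := by
      simp [List.drop_eq_nil_iff]; omega
    cases h : w.drop i with
    | nil => exact absurd h this
    | cons b u => simp [unitCW]
  · intro h; exact absurd (Finset.self_mem_range_succ w.length) h

lemma conv_smul_add_left (c : ℂ) (f g z : List A → ℂ) (w : List A) :
    conv (fun u => c * f u + g u) z w = c * conv f z w + conv g z w := by
  simp [conv, Finset.mul_sum, ← Finset.sum_add_distrib, add_mul, mul_assoc]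

lemma conv_assoc (x y z : List A → ℂ) : conv (conv x y) z = conv x (conv y z) := by
  funext w
  induction w generalizing x with
  | nil => simp [conv_nil, mul_assoc]
  | cons a w ih =>
    rw [conv_cons, conv_cons, conv_cons, conv_nil]
    have h1 : (fun u => conv x y (a :: u))
        = (fun u => x [] * (fun s => y (a :: s)) u + conv (fun s => x (a :: s)) y u) := by
      funext u; rw [conv_cons]
    rw [h1, conv_smul_add_left, ih]
    ring

lemma conv_sub_left (x y z : List A → ℂ) : conv (x - y) z = conv x z - conv y z := by
  funext w; simp [conv, sub_mul, Finset.sum_sub_distrib]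

lemma conv_sub_right (x y z : List A → ℂ) : conv x (y - z) = conv x y - conv x z := by
  funext w; simp [conv, mul_sub, Finset.sum_sub_distrib]

lemma conv_add_left (x y z : List A → ℂ) : conv (x + y) z = conv x z + conv y z := by
  funext w; simp [conv, add_mul, Finset.sum_add_distrib]

lemma nuW_nil (ν : Fin d → A → ℂ) (v : Fin d → ℂ) : nuW ν v ([] : List A) = 0 := by
  simp [nuW]

lemma nuW_append (ν : Fin d → A → ℂ) (v : Fin d → ℂ) (u w : List A) :
    nuW ν v (u ++ w) = nuW ν v u + nuW ν v w := by
  simp [nuW]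

lemma xi_conv (ν : Fin d → A → ℂ) (v : Fin d → ℂ) (x y : List A → ℂ) :
    xiOp ν v (conv x y) = conv (xiOp ν v x) y + conv x (xiOp ν v y) := by
  funext w
  simp only [xiOp, conv, Pi.add_apply, Finset.mul_sum, ← Finset.sum_add_distrib]
  refine Finset.sum_congr rfl fun i hi => ?_
  have h : nuW ν v w = nuW ν v (w.take i) + nuW ν v (w.drop i) := by
    conv_lhs => rw [← List.take_append_drop i w]
    exact nuW_append ..
  rw [h]; ring

lemma xi_sub (ν : Fin d → A → ℂ) (v : Fin d → ℂ) (x y : List A → ℂ) :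
    xiOp ν v (x - y) = xiOp ν v x - xiOp ν v y := by
  funext w; simp [xiOp, mul_sub]

lemma xi_unit (ν : Fin d → A → ℂ) (v : Fin d → ℂ) :
    xiOp ν v (unitCW : List A → ℂ) = 0 := by
  funext w
  cases w with
  | nil => simp [xiOp, nuW_nil]
  | cons a w => simp [xiOp, unitCW]

lemma inv_unique {a b c : List A → ℂ} (h1 : conv a b = unitCW) (h2 : conv c a = unitCW) :
    b = c := by
  calc b = conv unitCW b := (conv_unit_left b).symm
    _ = conv (conv c a) b := by rw [h2]
    _ = conv c (conv a b) := conv_assoc ..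
    _ = conv c unitCW := by rw [h1]
    _ = c := conv_unit_right c

lemma conv_reassoc (p x q r : List A → ℂ) :
    conv (conv p x) (conv q r) = conv (conv p (conv x q)) r := by
  rw [conv_assoc p x, ← conv_assoc x q r, ← conv_assoc p (conv x q) r]

lemma conv_cancel (a b k kinv : List A → ℂ) (h : conv k kinv = unitCW) :
    conv (conv a k) (conv kinv b) = conv a b := by
  rw [conv_reassoc, h, conv_unit_right]

end Aux

open Aux in
/-- freedom in the normal form. With `β̂ = κ★β★κ⁻¹ − (ξ_v κ)★κ⁻¹`
satisfying `ξ_v β̂ = 0`, and `β̃ = κ̃★β★κ̃⁻¹ − (ξ_v κ̃)★κ̃⁻¹`, `δ = κ̃★κ⁻¹`, one has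
`ξ_v β̃ = 0` iff `ξ_v δ = 0` and `β̃ = δ★β̂★δ⁻¹`. -/
theorem stmt14 {A : Type*} [Countable A] {d : ℕ} (hd : 1 ≤ d) (ν : Fin d → A → ℂ)
    (v : Fin d → ℂ) (β : List A → ℂ) (hβ : isLie β)
    (κ κinv κt κtinv δ δinv βhat βtil : List A → ℂ)
    (hκ : isGrp κ) (hκt : isGrp κt)
    (hκinv₁ : conv κ κinv = unitCW) (hκinv₂ : conv κinv κ = unitCW)
    (hκtinv₁ : conv κt κtinv = unitCW) (hκtinv₂ : conv κtinv κt = unitCW)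
    (hβhat : βhat = conv (conv κ β) κinv - conv (xiOp ν v κ) κinv)
    (hnorm : xiOp ν v βhat = 0)
    (hβtil : βtil = conv (conv κt β) κtinv - conv (xiOp ν v κt) κtinv)
    (hδ : δ = conv κt κinv)
    (hδinv₁ : conv δ δinv = unitCW) (hδinv₂ : conv δinv δ = unitCW) :
    xiOp ν v βtil = 0 ↔ (xiOp ν v δ = 0 ∧ βtil = conv (conv δ βhat) δinv) := by
  -- κt = δ ★ κ
  have hdk : conv δ κ = κt := by
    rw [hδ, conv_assoc, hκinv₂, conv_unit_right]
  -- κtinv = κinv ★ δinv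
  have hktinv : κtinv = conv κinv δinv := by
    refine inv_unique hκtinv₁ ?_
    rw [← hdk, conv_cancel κinv κ δinv δ hδinv₂, hκinv₂]
  -- normal form: βtil = δ ★ βhat ★ δinv - (ξδ) ★ δinv
  have hB : βtil = conv (conv δ βhat) δinv - conv (xiOp ν v δ) δinv := by
    rw [hβtil, hktinv, ← hdk, xi_conv, conv_add_left, hβhat, conv_sub_right, conv_sub_left]
    rw [conv_assoc δ κ β, conv_reassoc δ (conv κ β) κinv δinv,
        conv_cancel (xiOp ν v δ) δinv κ κinv hκinv₁,
        conv_reassoc δ (xiOp ν v κ) κinv δinv]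
    abel
  -- ξ of δinv vanishes when ξδ does
  have hxidinv : xiOp ν v δ = 0 → xiOp ν v δinv = 0 := by
    intro h0
    have h1 := congrArg (xiOp ν v) hδinv₁
    rw [xi_conv, xi_unit, h0, conv_zero_left, zero_add] at h1
    calc xiOp ν v δinv = conv unitCW (xiOp ν v δinv) := (conv_unit_left _).symm
      _ = conv δinv (conv δ (xiOp ν v δinv)) := by rw [← hδinv₂, conv_assoc]
      _ = 0 := by rw [h1, conv_zero_right]
  constructor
  · -- forward direction
    intro h
    have hβhat0 : βhat [] = 0 := by
      rw [hβhat]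
      simp [conv_nil, hβ.1, xiOp, nuW_nil]
    have hβtil0 : βtil [] = 0 := by
      rw [hβtil]
      simp [conv_nil, hβ.1, xiOp, nuW_nil]
    -- ξδ = δ ★ βhat - βtil ★ δ
    have he : xiOp ν v δ = conv δ βhat - conv βtil δ := by
      have h1 : conv (xiOp ν v δ) δinv = conv (conv δ βhat) δinv - βtil := by
        rw [hB]; abel
      have h2 := congrArg (fun z => conv z δ) h1
      rw [conv_assoc, hδinv₂, conv_unit_right, conv_sub_left,
          conv_assoc, hδinv₂, conv_unit_right] at h2
      rw [h2]
    have hee := congrArg (xiOp ν v) he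
    rw [xi_sub, xi_conv, xi_conv, hnorm, h, conv_zero_right, add_zero,
        conv_zero_left, zero_add] at hee
    -- induction on word length
    have key : ∀ n : ℕ, ∀ w : List A, w.length = n → xiOp ν v δ w = 0 := by
      intro n
      induction n using Nat.strong_induction_on with
      | _ n ih =>
        intro w hw
        have h1 := congrFun hee w
        have hz1 : conv (xiOp ν v δ) βhat w = 0 := by
          unfold conv
          refine Finset.sum_eq_zero fun i hi => ?_
          rcases lt_or_eq_of_le (Nat.lt_succ_iff.mp (Finset.mem_range.mp hi)) with hlt | heq
          · have : (w.take i).length < n := by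
              rw [List.length_take]; omega
            rw [ih _ this _ rfl, zero_mul]
          · rw [heq, List.drop_length, hβhat0, mul_zero]
        have hz2 : conv βtil (xiOp ν v δ) w = 0 := by
          unfold conv
          refine Finset.sum_eq_zero fun i hi => ?_
          rcases Nat.eq_zero_or_pos i with h0 | hpos
          · rw [h0, List.take_zero, hβtil0, zero_mul]
          · have hin : i ≤ w.length := Nat.lt_succ_iff.mp (Finset.mem_range.mp hi)
            have : (w.drop i).length < n := by
              rw [List.length_drop]; omega
            rw [ih _ this _ rfl, mul_zero]
        rw [Pi.sub_apply, hz1, hz2, sub_zero] at h1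
        simp only [xiOp] at h1 ⊢
        rcases mul_eq_zero.mp h1 with h2 | h2
        · rw [h2, zero_mul]
        · exact h2
    have hξδ : xiOp ν v δ = 0 := funext fun w => key w.length w rfl
    refine ⟨hξδ, ?_⟩
    rw [hB, hξδ, conv_zero_left, sub_zero]
  · -- backward direction
    rintro ⟨h0, hbt⟩
    rw [hbt, xi_conv, xi_conv, hnorm, h0, hxidinv h0,
        conv_zero_left, conv_zero_right, conv_zero_right, add_zero, zero_add, conv_zero_left]
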